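/- Columns Theorem: let A be a (d+1)×(d+1) matrix and for each j let Λ_j = diag(A_{0j},…,A_{dj}) be the diagonal matrix formed from column j of A. Set Λ = Σ_j v_j Λ_j with commuting indeterminates v_j. Then the N-th symmetric power of Λ is diagonal, and its diagonal entry at multi-index m equals Σ_n Ā_{mn} v^n; i.e., the coefficient of v^n in the diagonal of Λ̄ is the diagonal matrix whose m-entry is Ā_{mn}. -/

import Mathlib

open MvPolynomial Matrix BigOperators

/-- Multi-indices of `d+1` entries with total degree `N`. -/
abbrev MIdx (d N : ℕ) := {m : Fin (d+1) → ℕ // ∑ i, m i = N}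

instance (d N : ℕ) : Fintype (MIdx d N) :=
  Fintype.subtype (Finset.Nat.antidiagonalTuple (d+1) N)
    (fun _ => Finset.Nat.mem_antidiagonalTuple)

/-- The `(m,n)` matrix element of the symmetric power of `A`:
the coefficient of `x^n` in `(Ax)^m`. -/
noncomputable def symPowEntry {R : Type} [CommSemiring R] {d : ℕ}
    (A : Matrix (Fin (d+1)) (Fin (d+1)) R) (m n : Fin (d+1) → ℕ) : R :=
  MvPolynomial.coeff (Finsupp.equivFunOnFinite.symm n)
    (∏ i, (∑ j, MvPolynomial.C (A i j) * MvPolynomial.X j) ^ m i)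

/-- The `N`-th symmetric power of `A`, as a matrix indexed by multi-indices
of total degree `N`. -/
noncomputable def symPow {R : Type} [CommSemiring R] (d N : ℕ)
    (A : Matrix (Fin (d+1)) (Fin (d+1)) R) : Matrix (MIdx d N) (MIdx d N) R :=
  fun m n => symPowEntry A m.1 n.1

/-- `Γ(g)_{mn}`: the coefficient of `x^n` in `(Σ_{μ,λ} g_{μλ} x_λ ∂_μ) x^m`. -/
noncomputable def gammaEntry {d : ℕ} (g : Matrix (Fin (d+1)) (Fin (d+1)) ℂ)
    (m n : Fin (d+1) → ℕ) : ℂ :=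
  MvPolynomial.coeff (Finsupp.equivFunOnFinite.symm n)
    (∑ μ, ∑ lam, MvPolynomial.C (g μ lam) *
      (MvPolynomial.X lam * MvPolynomial.pderiv μ
        (MvPolynomial.monomial (Finsupp.equivFunOnFinite.symm m) 1)))

/-- The degree-`N` generator `Γ(g)` of the symmetric representation. -/
noncomputable def gammaMat (d N : ℕ) (g : Matrix (Fin (d+1)) (Fin (d+1)) ℂ) :
    Matrix (MIdx d N) (MIdx d N) ℂ :=
  fun m n => gammaEntry g m.1 n.1

/-- The diagonal matrix `B` of multinomial coefficients of degree `N`. -/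
noncomputable def multinomMat (d N : ℕ) : Matrix (MIdx d N) (MIdx d N) ℂ :=
  Matrix.diagonal fun m => (Nat.multinomial Finset.univ m.1 : ℂ)

/-- Columns Theorem: with `Λ_j` the diagonal matrix from column `j` of `A` and
`Λ = Σ_j v_j Λ_j` (in indeterminates `v_j`), the symmetric power `Λ̄` is
diagonal with `m`-entry `Σ_n Ā_{mn} v^n`. -/
lemma degree_symm (d : ℕ) (s : Fin (d+1) → ℕ) :
    (Finsupp.equivFunOnFinite.symm s).degree = ∑ i, s i := by
  rw [Finsupp.degree_apply]
  rw [Finset.sum_subset (Finset.subset_univ _)]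
  · simp
  · intro i _ h
    simpa using Finsupp.notMem_support_iff.mp h

lemma prod_pow_eq_monomial {R : Type} [CommSemiring R] (d : ℕ) (s : Fin (d+1) → ℕ) :
    ∏ j, (X j : MvPolynomial (Fin (d+1)) R) ^ s j
      = monomial (Finsupp.equivFunOnFinite.symm s) 1 := by
  rw [← prod_X_pow_eq_monomial]
  refine (Finset.prod_subset (Finset.subset_univ _) (fun i _ h => ?_)).symm
  have : s i = 0 := by simpa using Finsupp.notMem_support_iff.mp h
  simp [this]

lemma homog_expand {d N : ℕ} (p : MvPolynomial (Fin (d+1)) ℂ) (hp : p.IsHomogeneous N) :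
    p = ∑ n : MIdx d N,
      C (coeff (Finsupp.equivFunOnFinite.symm n.1) p) * ∏ j, X j ^ n.1 j := by
  ext k
  simp only [coeff_sum, prod_pow_eq_monomial, C_mul_monomial, mul_one, coeff_monomial]
  by_cases hk : ∑ i, (Finsupp.equivFunOnFinite k) i = N
  · rw [Finset.sum_eq_single (⟨Finsupp.equivFunOnFinite k, hk⟩ : MIdx d N)]
    · simp
    · intro b _ hb
      rw [if_neg]
      intro h
      exact hb (Subtype.ext (by simpa using congrArg Finsupp.equivFunOnFinite h))
    · simp
  · rw [hp.coeff_eq_zero, Finset.sum_eq_zero]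
    · intro b _
      rw [if_neg]
      intro h
      apply hk
      have hb : (b.1 : Fin (d+1) → ℕ) = Finsupp.equivFunOnFinite k := by
        simpa using congrArg Finsupp.equivFunOnFinite h
      rw [← hb]
      exact b.2
    · rw [show k.degree = ∑ i, (Finsupp.equivFunOnFinite k) i from ?_]
      · exact hk
      · rw [← degree_symm d (Finsupp.equivFunOnFinite k)]; simp

theorem columns_theorem (d N : ℕ) (A : Matrix (Fin (d+1)) (Fin (d+1)) ℂ) :
    symPow d N
        (Matrix.diagonal fun i =>
          ∑ j, MvPolynomial.X j * MvPolynomial.C (A i j))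
      = Matrix.diagonal (fun m : MIdx d N =>
          ∑ n : MIdx d N, MvPolynomial.C (symPowEntry A m.1 n.1) *
            ∏ j, MvPolynomial.X j ^ n.1 j) := by
  set f : Fin (d+1) → MvPolynomial (Fin (d+1)) ℂ :=
    fun i => ∑ j, X j * C (A i j) with hf
  funext m n
  have key : ∀ i : Fin (d+1),
      (∑ j, C ((Matrix.diagonal f) i j) * X j :
        MvPolynomial (Fin (d+1)) (MvPolynomial (Fin (d+1)) ℂ))
      = C (f i) * X i := by
    intro i
    rw [Finset.sum_eq_single i]
    · rw [Matrix.diagonal_apply_eq]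
    · intro j _ hj
      rw [Matrix.diagonal_apply_ne _ (Ne.symm hj)]
      simp
    · simp
  have lhs_eq : symPow d N (Matrix.diagonal f) m n
      = if m.1 = n.1 then ∏ i, f i ^ m.1 i else 0 := by
    rw [symPow, symPowEntry]
    simp only [key, mul_pow, ← map_pow, Finset.prod_mul_distrib, ← map_prod,
      prod_pow_eq_monomial, C_mul_monomial, mul_one, coeff_monomial]
    congr 1
    simp only [eq_iff_iff]
    constructor
    · intro h; simpa using congrArg Finsupp.equivFunOnFinite h
    · intro h; rw [h]
  rw [lhs_eq, Matrix.diagonal_apply]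
  by_cases h : m = n
  · subst h
    rw [if_pos rfl, if_pos rfl]
    have hfh : ∀ i, (f i).IsHomogeneous 1 := by
      intro i
      apply MvPolynomial.IsHomogeneous.sum
      intro j _
      simpa using (isHomogeneous_X ℂ j).mul (isHomogeneous_C _ (A i j))
    have hp : (∏ i, f i ^ m.1 i).IsHomogeneous N := by
      have := MvPolynomial.IsHomogeneous.prod Finset.univ (fun i => f i ^ m.1 i)
        (fun i => 1 * m.1 i) (fun i _ => (hfh i).pow (m.1 i))
      simp only [one_mul] at this
      rwa [m.2] at this
    have hprod : (∏ i, f i ^ m.1 i)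
        = ∏ i, (∑ j, (C (A i j) : MvPolynomial (Fin (d+1)) ℂ) * X j) ^ m.1 i := by
      refine Finset.prod_congr rfl fun i _ => ?_
      congr 1
      exact Finset.sum_congr rfl fun j _ => mul_comm _ _
    rw [homog_expand _ hp]
    simp only [symPowEntry, hprod]
  · rw [if_neg (fun hh => h (Subtype.ext hh)), if_neg h]
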